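/- Let A be a symmetric positive definite p×p matrix with smallest eigenvalue τ_A > 0, B a p×p matrix, Y ∈ ℝᵖ, and k ≥ 1 an integer. Then |tr((A + YYᵀ)⁻ᵏ B) - tr(A⁻ᵏ B)| ≤ k‖B‖ / τ_Aᵏ. -/

import Mathlib

open Matrix

/-- Spectral (ℓ²-operator) norm of a real matrix. -/
noncomputable def opNorm {p : ℕ} (B : Matrix (Fin p) (Fin p) ℝ) : ℝ :=
  ‖Matrix.toEuclideanCLM (𝕜 := ℝ) B‖

section aux
variable {p : ℕ}

noncomputable def ee : (Fin p → ℝ) ≃ₗ[ℝ] EuclideanSpace ℝ (Fin p) :=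
  (WithLp.linearEquiv 2 ℝ (Fin p → ℝ)).symm

lemma dot_inner (x y : Fin p → ℝ) : x ⬝ᵥ y = inner ℝ (ee x) (ee y) := by
  simp [ee, PiLp.inner_apply, dotProduct, RCLike.inner_apply, mul_comm]

lemma ee_mulVec (C : Matrix (Fin p) (Fin p) ℝ) (x : Fin p → ℝ) :
    ee (C *ᵥ x) = Matrix.toEuclideanCLM (𝕜 := ℝ) C (ee x) := by
  simp [ee, WithLp.linearEquiv]

lemma norm_ee_mulVec_le (C : Matrix (Fin p) (Fin p) ℝ) (x : Fin p → ℝ) :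
    ‖ee (C *ᵥ x)‖ ≤ opNorm C * ‖ee x‖ := by
  rw [ee_mulVec]; exact (Matrix.toEuclideanCLM (𝕜 := ℝ) C).le_opNorm _

lemma dot_mulVec_bound (C : Matrix (Fin p) (Fin p) ℝ) (x y : Fin p → ℝ) :
    |x ⬝ᵥ (C *ᵥ y)| ≤ opNorm C * (‖ee x‖ * ‖ee y‖) := by
  rw [dot_inner, ee_mulVec]
  calc |inner ℝ (ee x) (Matrix.toEuclideanCLM (𝕜 := ℝ) C (ee y))|
      ≤ ‖ee x‖ * ‖Matrix.toEuclideanCLM (𝕜 := ℝ) C (ee y)‖ := abs_real_inner_le_norm _ _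
    _ ≤ ‖ee x‖ * (opNorm C * ‖ee y‖) := by
        gcongr; exact (Matrix.toEuclideanCLM (𝕜 := ℝ) C).le_opNorm _
    _ = opNorm C * (‖ee x‖ * ‖ee y‖) := by ring

lemma opNorm_nonneg (C : Matrix (Fin p) (Fin p) ℝ) : 0 ≤ opNorm C := norm_nonneg _

lemma opNorm_mul_le (C D : Matrix (Fin p) (Fin p) ℝ) :
    opNorm (C * D) ≤ opNorm C * opNorm D := by
  unfold opNorm; rw [_root_.map_mul]; exact norm_mul_le _ _

lemma opNorm_pow_le (C : Matrix (Fin p) (Fin p) ℝ) {t : ℝ} (ht : 0 ≤ t)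
    (h : opNorm C ≤ t) (n : ℕ) : opNorm (C ^ n) ≤ t ^ n := by
  induction n with
  | zero => 
      have : opNorm (C ^ 0) = ‖(1 : EuclideanSpace ℝ (Fin p) →L[ℝ] EuclideanSpace ℝ (Fin p))‖ := by
        rw [pow_zero]; unfold opNorm; rw [_root_.map_one]
      rw [this, pow_zero, ContinuousLinearMap.one_def]
      exact ContinuousLinearMap.norm_id_le
  | succ n ih =>
      calc opNorm (C ^ (n + 1)) ≤ opNorm (C ^ n) * opNorm C := by
            rw [pow_succ]; exact opNorm_mul_le _ _
        _ ≤ t ^ n * t := by gcongr; exact opNorm_nonneg _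
        _ = t ^ (n + 1) := by rw [pow_succ]

lemma dot_self_eq (x : Fin p → ℝ) : x ⬝ᵥ x = ‖ee x‖ ^ 2 := by
  rw [dot_inner, real_inner_self_eq_norm_sq]

lemma opNorm_inv_le {M : Matrix (Fin p) (Fin p) ℝ} {τ : ℝ} (hτ : 0 < τ)
    (hM : IsUnit M.det) (hlb : ∀ x : Fin p → ℝ, τ * (x ⬝ᵥ x) ≤ x ⬝ᵥ (M *ᵥ x)) :
    opNorm M⁻¹ ≤ τ⁻¹ := by
  apply ContinuousLinearMap.opNorm_le_bound _ (by positivity)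
  intro z
  set y : Fin p → ℝ := ee.symm z with hy
  have hz : z = ee y := by simp [hy]
  set x : Fin p → ℝ := M⁻¹ *ᵥ y with hx
  have happ : Matrix.toEuclideanCLM (𝕜 := ℝ) M⁻¹ z = ee x := by
    rw [hz, ← ee_mulVec]
  rw [happ, hz]
  have hMx : M *ᵥ x = y := by
    rw [hx, Matrix.mulVec_mulVec, Matrix.mul_nonsing_inv _ hM, Matrix.one_mulVec]
  have h1 : τ * ‖ee x‖ ^ 2 ≤ ‖ee x‖ * ‖ee y‖ := by
    calc τ * ‖ee x‖ ^ 2 = τ * (x ⬝ᵥ x) := by rw [dot_self_eq]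
      _ ≤ x ⬝ᵥ (M *ᵥ x) := hlb x
      _ = x ⬝ᵥ y := by rw [hMx]
      _ ≤ |x ⬝ᵥ y| := le_abs_self _
      _ ≤ ‖ee x‖ * ‖ee y‖ := by rw [dot_inner]; exact abs_real_inner_le_norm _ _
  rcases eq_or_lt_of_le (norm_nonneg (ee x)) with h0 | h0
  · rw [← h0]; positivity
  · rw [pow_two, ← mul_assoc, mul_comm (‖ee x‖) (‖ee y‖)] at h1
    have := le_of_mul_le_mul_right h1 h0
    calc ‖ee x‖ ≤ τ⁻¹ * (τ * ‖ee x‖) := by rw [← mul_assoc, inv_mul_cancel₀ hτ.ne', one_mul]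
      _ ≤ τ⁻¹ * ‖ee y‖ := mul_le_mul_of_nonneg_left this (by positivity)

lemma vecMulVec_mulVec' (u v x : Fin p → ℝ) :
    (vecMulVec u v) *ᵥ x = (v ⬝ᵥ x) • u := by
  ext i
  simp [vecMulVec, mulVec, dotProduct, Finset.mul_sum, mul_comm, mul_left_comm]

lemma trace_mul_vecMulVec (C : Matrix (Fin p) (Fin p) ℝ) (u v : Fin p → ℝ) :
    (C * vecMulVec u v).trace = v ⬝ᵥ (C *ᵥ u) := by
  simp only [Matrix.trace, Matrix.diag, Matrix.mul_apply, vecMulVec_apply, mulVec, dotProduct,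
    Finset.mul_sum]
  congr 1; ext i; congr 1; ext j; ring

lemma vecMulVec_posSemidef (v : Fin p → ℝ) : (vecMulVec v v).PosSemidef := by
  refine .of_dotProduct_mulVec_nonneg ?_ ?_
  · ext i j; simp [vecMulVec, Matrix.conjTranspose_apply, mul_comm]
  · intro x
    simp only [RCLike.star_def, star_trivial]
    rw [vecMulVec_mulVec', dotProduct_smul, smul_eq_mul, dotProduct_comm]
    exact mul_self_nonneg _

lemma rank_one_key {A : Matrix (Fin p) (Fin p) ℝ} {Y : Fin p → ℝ} {τ : ℝ}
    (hτ : 0 < τ) (hA : A.PosDef)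
    (hlb : ∀ x : Fin p → ℝ, τ * (x ⬝ᵥ x) ≤ x ⬝ᵥ (A *ᵥ x)) :
    ‖ee (A⁻¹ *ᵥ Y)‖ * ‖ee ((A + vecMulVec Y Y)⁻¹ *ᵥ Y)‖ ≤ τ⁻¹ := by
  set M := A + vecMulVec Y Y with hMdef
  have hM : M.PosDef := hA.add_posSemidef (vecMulVec_posSemidef Y)
  have hMdet : IsUnit M.det := (Matrix.isUnit_iff_isUnit_det M).mp hM.isUnit
  have hAdet : IsUnit A.det := (Matrix.isUnit_iff_isUnit_det A).mp hA.isUnit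
  set u : Fin p → ℝ := M⁻¹ *ᵥ Y with hu
  set z : Fin p → ℝ := A⁻¹ *ᵥ Y with hz
  set s : ℝ := Y ⬝ᵥ u with hs
  have hMu : M *ᵥ u = Y := by
    rw [hu, Matrix.mulVec_mulVec, Matrix.mul_nonsing_inv _ hMdet, Matrix.one_mulVec]
  have hAu : A *ᵥ u = (1 - s) • Y := by
    have : A *ᵥ u + (Y ⬝ᵥ u) • Y = Y := by
      rw [← vecMulVec_mulVec' Y Y u, ← Matrix.add_mulVec, ← hMdef, hMu]
    have h2 : A *ᵥ u = Y - (Y ⬝ᵥ u) • Y := eq_sub_of_add_eq this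
    rw [h2, ← hs, sub_smul, one_smul]
  have huz : u = (1 - s) • z := by
    have : A⁻¹ *ᵥ (A *ᵥ u) = u := by
      rw [Matrix.mulVec_mulVec, Matrix.nonsing_inv_mul _ hAdet, Matrix.one_mulVec]
    rw [← this, hAu, Matrix.mulVec_smul, hz]
  have hsu : u ⬝ᵥ (A *ᵥ u) = s * (1 - s) := by
    rw [hAu, dotProduct_smul, smul_eq_mul, dotProduct_comm, ← hs]; ring
  have hkey : τ * ‖ee u‖ ^ 2 ≤ s * (1 - s) := by
    rw [← hsu, ← dot_self_eq]; exact hlb u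
  rcases le_or_gt (1 - s) 0 with hcase | hcase
  · have hs1 : 1 ≤ s := by linarith
    have : τ * ‖ee u‖ ^ 2 ≤ 0 := le_trans hkey (mul_nonpos_of_nonneg_of_nonpos (by linarith) hcase)
    have h4 : ‖ee u‖ ^ 2 = 0 := le_antisymm (by nlinarith) (sq_nonneg _)
    have hu0 : ‖ee u‖ = 0 := by
      have := sq_eq_zero_iff.mp h4; simpa using this
    rw [hu0, mul_zero]
    positivity
  · have hnorm : ‖ee u‖ = (1 - s) * ‖ee z‖ := by
      rw [huz, _root_.map_smul, norm_smul, Real.norm_eq_abs, abs_of_pos hcase]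
    have hzsq : τ * ((1 - s) ^ 2 * ‖ee z‖ ^ 2) ≤ s * (1 - s) := by
      calc τ * ((1 - s) ^ 2 * ‖ee z‖ ^ 2) = τ * ‖ee u‖ ^ 2 := by rw [hnorm]; ring
        _ ≤ s * (1 - s) := hkey
    have hprod : ‖ee z‖ * ‖ee u‖ = (1 - s) * ‖ee z‖ ^ 2 := by rw [hnorm]; ring
    rw [hprod]
    have hs1 : s ≤ 1 := by linarith
    have h3 : τ * ((1 - s) * ‖ee z‖ ^ 2) ≤ 1 := by nlinarith [hzsq, sq_nonneg (‖ee z‖)]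
    calc (1 - s) * ‖ee z‖ ^ 2 = τ⁻¹ * (τ * ((1 - s) * ‖ee z‖ ^ 2)) := by
          field_simp
      _ ≤ τ⁻¹ * 1 := mul_le_mul_of_nonneg_left h3 (by positivity)
      _ = τ⁻¹ := mul_one _

lemma main_induction {A : Matrix (Fin p) (Fin p) ℝ} {Y : Fin p → ℝ} {τ : ℝ}
    (hτ : 0 < τ) (hA : A.PosDef)
    (hlb : ∀ x : Fin p → ℝ, τ * (x ⬝ᵥ x) ≤ x ⬝ᵥ (A *ᵥ x)) (n : ℕ) :
    ∀ B : Matrix (Fin p) (Fin p) ℝ,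
      |((((A + vecMulVec Y Y)⁻¹) ^ n) * B).trace - ((A⁻¹ ^ n) * B).trace| ≤
        n * opNorm B / τ ^ n := by
  set V := vecMulVec Y Y with hVdef
  set M := A + V with hMdef
  have hV : V.PosSemidef := vecMulVec_posSemidef Y
  have hM : M.PosDef := hA.add_posSemidef hV
  have hMdet : IsUnit M.det := (Matrix.isUnit_iff_isUnit_det M).mp hM.isUnit
  have hAdet : IsUnit A.det := (Matrix.isUnit_iff_isUnit_det A).mp hA.isUnit
  have hlbM : ∀ x : Fin p → ℝ, τ * (x ⬝ᵥ x) ≤ x ⬝ᵥ (M *ᵥ x) := by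
    intro x
    have h0 : (0:ℝ) ≤ x ⬝ᵥ (V *ᵥ x) := by simpa using hV.dotProduct_mulVec_nonneg x
    rw [hMdef, Matrix.add_mulVec, dotProduct_add]
    linarith [hlb x]
  set X := M⁻¹ with hXdef
  set Z := A⁻¹ with hZdef
  have hXle : opNorm X ≤ τ⁻¹ := opNorm_inv_le hτ hMdet hlbM
  have hZle : opNorm Z ≤ τ⁻¹ := opNorm_inv_le hτ hAdet hlb
  have hZsym : Zᵀ = Z := by
    rw [← Matrix.conjTranspose_eq_transpose_of_trivial]
    exact hA.isHermitian.inv.eq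
  have hXZ : X - Z = -(X * V * Z) := by
    have hVMA : V = M - A := by rw [hMdef]; abel
    have : X * V * Z = Z - X := by
      rw [hVMA, Matrix.mul_sub, Matrix.nonsing_inv_mul _ hMdet, Matrix.sub_mul, one_mul,
        mul_assoc, Matrix.mul_nonsing_inv _ hAdet, mul_one]
    rw [this, neg_sub]
  induction n with
  | zero => intro B; simp
  | succ n ih =>
      intro B
      have e1 : X ^ (n + 1) * B = X ^ n * (X * B) := by rw [pow_succ, mul_assoc]
      have e2 : Z ^ (n + 1) * B = Z ^ n * (Z * B) := by rw [pow_succ, mul_assoc]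
      have hsplit : (X ^ (n+1) * B).trace - (Z ^ (n+1) * B).trace =
          ((X ^ n * (X * B)).trace - (X ^ n * (Z * B)).trace) +
          ((X ^ n * (Z * B)).trace - (Z ^ n * (Z * B)).trace) := by
        rw [e1, e2]; ring
      -- first bracket
      have ht1 : (X ^ n * (X * B)).trace - (X ^ n * (Z * B)).trace =
          -((Z *ᵥ Y) ⬝ᵥ ((B * X ^ n) *ᵥ (X *ᵥ Y))) := by
        rw [← Matrix.trace_sub, ← Matrix.mul_sub, ← Matrix.sub_mul, hXZ]
        have hr1 : X ^ n * (-(X * V * Z) * B) = -((X ^ n * X * V) * (Z * B)) := by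
          simp only [neg_mul, mul_neg, mul_assoc]
        rw [hr1, Matrix.trace_neg, neg_inj, Matrix.trace_mul_comm]
        have hr2 : Z * B * (X ^ n * X * V) = (Z * ((B * X ^ n) * X)) * V := by
          simp only [mul_assoc]
        rw [hr2, trace_mul_vecMulVec, ← Matrix.mulVec_mulVec, ← Matrix.mulVec_mulVec,
          Matrix.dotProduct_mulVec, ← Matrix.mulVec_transpose, hZsym]
      have hb1 : |(Z *ᵥ Y) ⬝ᵥ ((B * X ^ n) *ᵥ (X *ᵥ Y))| ≤ opNorm B / τ ^ (n + 1) := by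
        calc |(Z *ᵥ Y) ⬝ᵥ ((B * X ^ n) *ᵥ (X *ᵥ Y))|
            ≤ opNorm (B * X ^ n) * (‖ee (Z *ᵥ Y)‖ * ‖ee (X *ᵥ Y)‖) := dot_mulVec_bound _ _ _
          _ ≤ (opNorm B * τ⁻¹ ^ n) * τ⁻¹ := by
              apply mul_le_mul
              · exact le_trans (opNorm_mul_le _ _)
                  (mul_le_mul_of_nonneg_left (opNorm_pow_le X (by positivity) hXle n)
                    (opNorm_nonneg _))
              · exact rank_one_key hτ hA hlb
              · positivity
              · exact mul_nonneg (opNorm_nonneg _) (by positivity)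
          _ = opNorm B / τ ^ (n + 1) := by
              rw [pow_succ]; field_simp [hτ.ne']
              rw [one_div, inv_pow, mul_assoc, inv_mul_cancel₀ (pow_ne_zero _ hτ.ne'), mul_one]
      -- second bracket
      have hb2 : |(X ^ n * (Z * B)).trace - (Z ^ n * (Z * B)).trace| ≤
          n * opNorm B / τ ^ (n + 1) := by
        calc |(X ^ n * (Z * B)).trace - (Z ^ n * (Z * B)).trace|
            ≤ n * opNorm (Z * B) / τ ^ n := ih (Z * B)
          _ ≤ n * (τ⁻¹ * opNorm B) / τ ^ n := by
              have h : opNorm (Z * B) ≤ τ⁻¹ * opNorm B :=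
                le_trans (opNorm_mul_le _ _)
                  (mul_le_mul_of_nonneg_right hZle (opNorm_nonneg _))
              have h2 := mul_le_mul_of_nonneg_left h (by positivity : (0:ℝ) ≤ (n:ℝ))
              exact div_le_div_of_nonneg_right h2 (by positivity)
          _ = n * opNorm B / τ ^ (n + 1) := by
              rw [pow_succ, div_eq_div_iff (by positivity) (by positivity)]
              field_simp
      calc |(X ^ (n+1) * B).trace - (Z ^ (n+1) * B).trace|
          ≤ |(X ^ n * (X * B)).trace - (X ^ n * (Z * B)).trace| +
            |(X ^ n * (Z * B)).trace - (Z ^ n * (Z * B)).trace| := by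
            rw [hsplit]; exact abs_add_le _ _
        _ ≤ opNorm B / τ ^ (n + 1) + n * opNorm B / τ ^ (n + 1) := by
            exact add_le_add (by rw [ht1, abs_neg]; exact hb1) hb2
        _ = (n + 1 : ℕ) * opNorm B / τ ^ (n + 1) := by
            rw [← add_div]; congr 1; push_cast; ring

end aux

/-- Rank-one perturbation bound for the trace of powers of the resolvent. -/
theorem trace_resolvent_pow_rank_one_perturbation {p : ℕ}
    (A B : Matrix (Fin p) (Fin p) ℝ) (Y : Fin p → ℝ) (τA : ℝ) (k : ℕ)
    (hk : 1 ≤ k) (hA : A.PosDef) (hτ : 0 < τA)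
    (hlb : ∀ x : Fin p → ℝ, τA * (x ⬝ᵥ x) ≤ x ⬝ᵥ (A *ᵥ x)) :
    |(((A + vecMulVec Y Y)⁻¹) ^ k * B).trace - ((A⁻¹) ^ k * B).trace| ≤
      k * opNorm B / τA ^ k := by
  exact main_induction hτ hA hlb k B
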